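/- For every positive integer n, the function u_n(x1,x2,t) = exp(-λ_n² t)·sin(4nπ x1)·sin(4nπ x2) with λ_n = 4nπ√2 satisfies the heat equation ∂_t u_n - Δu_n = 0 on ℝ² × ℝ, and u_n vanishes on the boundary of the square S = (0,1)×(0,1) as well as on the boundary of the square S̃ = (1/4,3/4)×(1/4,3/4) for all times t. -/
import Mathlib


open Real

lemma aux_sin_deriv (a x : ℝ) :
    HasDerivAt (fun y => Real.sin (a * y)) (Real.cos (a * x) * a) x := by
  simpa using ((hasDerivAt_id x).const_mul a).sin

lemma aux_cos_deriv (a x : ℝ) :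
    HasDerivAt (fun y => Real.cos (a * y)) (-Real.sin (a * x) * a) x := by
  simpa using ((hasDerivAt_id x).const_mul a).cos

lemma aux_sin_mul (m : ℕ) (x : ℝ) (h : x = m * π) : Real.sin x = 0 := by
  rw [h]; exact Real.sin_nat_mul_pi m

/-- For every positive integer `n`, the function
`u_n(x₁,x₂,t) = exp(-λ_n² t) sin(4nπ x₁) sin(4nπ x₂)` with `λ_n = 4nπ√2`
satisfies the heat equation `∂_t u - Δ u = 0` on `ℝ² × ℝ`, and vanishes on the
boundaries of the squares `S = (0,1)²` and `S̃ = (1/4,3/4)²` for all times. -/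
theorem stmt_0 (n : ℕ) (hn : 0 < n)
    (lam : ℝ) (hlam : lam = 4 * n * π * Real.sqrt 2)
    (u : ℝ → ℝ → ℝ → ℝ)
    (hu : ∀ x1 x2 t, u x1 x2 t =
      Real.exp (-(lam ^ 2) * t) * Real.sin (4 * n * π * x1) * Real.sin (4 * n * π * x2)) :
    (∀ x1 x2 t,
      deriv (fun s => u x1 x2 s) t -
        (deriv (fun y => deriv (fun z => u z x2 t) y) x1 +
         deriv (fun y => deriv (fun z => u x1 z t) y) x2) = 0) ∧
    (∀ x1 x2 t, ((x1 = 0 ∨ x1 = 1) ∧ x2 ∈ Set.Icc (0:ℝ) 1) ∨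
        ((x2 = 0 ∨ x2 = 1) ∧ x1 ∈ Set.Icc (0:ℝ) 1) → u x1 x2 t = 0) ∧
    (∀ x1 x2 t, ((x1 = 1/4 ∨ x1 = 3/4) ∧ x2 ∈ Set.Icc (1/4:ℝ) (3/4)) ∨
        ((x2 = 1/4 ∨ x2 = 3/4) ∧ x1 ∈ Set.Icc (1/4:ℝ) (3/4)) → u x1 x2 t = 0) := by
  have hue : u = fun x1 x2 t =>
      Real.exp (-(lam ^ 2) * t) * Real.sin (4 * n * π * x1) * Real.sin (4 * n * π * x2) := by
    funext x1 x2 t; exact hu x1 x2 t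
  refine ⟨?_, ?_, ?_⟩
  · intro x1 x2 t
    subst hue
    set a : ℝ := 4 * n * π with ha
    have hl2 : lam ^ 2 = 2 * a ^ 2 := by
      rw [hlam]
      have h2 : Real.sqrt 2 ^ 2 = 2 := Real.sq_sqrt (by norm_num)
      nlinarith [h2]
    set E : ℝ := Real.exp (-(lam ^ 2) * t) with hE
    -- time derivative
    have ht : deriv (fun s => Real.exp (-(lam ^ 2) * s) * Real.sin (a * x1) * Real.sin (a * x2)) t
        = -(lam ^ 2) * E * Real.sin (a * x1) * Real.sin (a * x2) := by
      have h := ((((hasDerivAt_id t).const_mul (-(lam ^ 2))).exp).mul_const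
        (Real.sin (a * x1))).mul_const (Real.sin (a * x2))
      simp only [id_eq, mul_one] at h
      rw [h.deriv, hE]; ring
    -- x1 derivative
    have hd1 : (fun y => deriv (fun z =>
        Real.exp (-(lam ^ 2) * t) * Real.sin (a * z) * Real.sin (a * x2)) y)
        = fun y => E * (Real.cos (a * y) * a) * Real.sin (a * x2) := by
      funext y
      exact (((aux_sin_deriv a y).const_mul E).mul_const (Real.sin (a * x2))).deriv
    have hx1 : deriv (fun y => deriv (fun z =>
        Real.exp (-(lam ^ 2) * t) * Real.sin (a * z) * Real.sin (a * x2)) y) x1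
        = E * (-Real.sin (a * x1) * a * a) * Real.sin (a * x2) := by
      rw [hd1]
      have h := (((aux_cos_deriv a x1).mul_const a).const_mul E).mul_const (Real.sin (a * x2))
      rw [h.deriv]
    -- x2 derivative
    have hd2 : (fun y => deriv (fun z =>
        Real.exp (-(lam ^ 2) * t) * Real.sin (a * x1) * Real.sin (a * z)) y)
        = fun y => (E * Real.sin (a * x1)) * (Real.cos (a * y) * a) := by
      funext y
      exact ((aux_sin_deriv a y).const_mul (E * Real.sin (a * x1))).deriv
    have hx2 : deriv (fun y => deriv (fun z =>
        Real.exp (-(lam ^ 2) * t) * Real.sin (a * x1) * Real.sin (a * z)) y) x2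
        = (E * Real.sin (a * x1)) * (-Real.sin (a * x2) * a * a) := by
      rw [hd2]
      have h := ((aux_cos_deriv a x2).mul_const a).const_mul (E * Real.sin (a * x1))
      rw [h.deriv]
    simp only []
    rw [ht, hx1, hx2, hl2]; ring
  · intro x1 x2 t h
    rcases h with ⟨h1 | h1, _⟩ | ⟨h2 | h2, _⟩
    · subst h1
      have hs : Real.sin (4 * (n:ℝ) * π * 0) = 0 := aux_sin_mul 0 _ (by push_cast; ring)
      rw [hu, hs]; ring
    · subst h1
      have hs : Real.sin (4 * (n:ℝ) * π * 1) = 0 := aux_sin_mul (4 * n) _ (by push_cast; ring)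
      rw [hu, hs]; ring
    · subst h2
      have hs : Real.sin (4 * (n:ℝ) * π * 0) = 0 := aux_sin_mul 0 _ (by push_cast; ring)
      rw [hu, hs]; ring
    · subst h2
      have hs : Real.sin (4 * (n:ℝ) * π * 1) = 0 := aux_sin_mul (4 * n) _ (by push_cast; ring)
      rw [hu, hs]; ring
  · intro x1 x2 t h
    rcases h with ⟨h1 | h1, _⟩ | ⟨h2 | h2, _⟩
    · subst h1
      have hs : Real.sin (4 * (n:ℝ) * π * (1/4)) = 0 := aux_sin_mul n _ (by push_cast; ring)
      rw [hu, hs]; ring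
    · subst h1
      have hs : Real.sin (4 * (n:ℝ) * π * (3/4)) = 0 := aux_sin_mul (3 * n) _ (by push_cast; ring)
      rw [hu, hs]; ring
    · subst h2
      have hs : Real.sin (4 * (n:ℝ) * π * (1/4)) = 0 := aux_sin_mul n _ (by push_cast; ring)
      rw [hu, hs]; ring
    · subst h2
      have hs : Real.sin (4 * (n:ℝ) * π * (3/4)) = 0 := aux_sin_mul (3 * n) _ (by push_cast; ring)
      rw [hu, hs]; ring
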